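/- Let E be a real normed vector space, K ≥ 0, and u₋, u₊ : E → ℝ with u₊(z) ≤ u₋(z) for all z ∈ E. Let y ∈ E satisfy u₋(y) = u₊(y). Suppose p is a K-super-differential of u₋ at y and q is a K-sub-differential of u₊ at y. Then p = q, and both u₋ and u₊ are Fréchet differentiable at y with derivative p. (Differentiability of a conjugate pair of weak KAM solutions at points of their contact set I(u₋, u₊), in the form used in the paper.) -/

import Mathlib

/-- if `u₊ ≤ u₋` with equality at `y`, `p` is a `K`-super-differential of
`u₋` at `y` and `q` is a `K`-sub-differential of `u₊` at `y`, then `p = q` and both `u₋`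
and `u₊` are Fréchet differentiable at `y` with derivative `p`. -/
theorem stmt_11 {E : Type*} [NormedAddCommGroup E] [NormedSpace ℝ E]
    (K : ℝ) (hK : 0 ≤ K) (um up : E → ℝ) (hle : ∀ z : E, up z ≤ um z)
    (y : E) (heq : um y = up y) (p q : E →L[ℝ] ℝ)
    (hp : ∀ h : E, um (y + h) ≤ um y + p h + K * ‖h‖ ^ 2)
    (hq : ∀ h : E, up y + q h - K * ‖h‖ ^ 2 ≤ up (y + h)) :
    p = q ∧ HasFDerivAt um p y ∧ HasFDerivAt up p y := by
  have hbound : ∀ h : E, q h ≤ p h + 2 * K * ‖h‖ ^ 2 := by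
    intro h
    have h1 := hq h
    have h2 := hp h
    have h3 := hle (y + h)
    linarith
  have hd : ∀ h : E, q h - p h ≤ 0 := by
    intro h
    by_contra hc
    push_neg at hc
    have hden : (0:ℝ) < 4 * K * ‖h‖ ^ 2 + 1 := by positivity
    set t : ℝ := (q h - p h) / (4 * K * ‖h‖ ^ 2 + 1) with ht'
    have ht : 0 < t := div_pos hc hden
    have hb := hbound (t • h)
    rw [map_smul, map_smul, norm_smul, Real.norm_eq_abs, abs_of_pos ht] at hb
    simp only [smul_eq_mul, mul_pow] at hb
    -- hb : t * q h ≤ t * p h + 2 * K * (t ^ 2 * ‖h‖ ^ 2)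
    have hcancel : q h - p h ≤ 2 * K * t * ‖h‖ ^ 2 := by
      have := (mul_le_mul_iff_right₀ ht).mp (by nlinarith : t * (q h - p h) ≤ t * (2 * K * t * ‖h‖ ^ 2))
      linarith
    have ht2 : t * (4 * K * ‖h‖ ^ 2 + 1) = q h - p h := by
      rw [ht']; field_simp
    nlinarith [mul_nonneg (mul_nonneg hK (sq_nonneg ‖h‖)) ht.le]
  have hpq : p = q := by
    ext h
    have h1 := hd h
    have h2 := hd (-h)
    simp only [map_neg] at h2
    linarith
  have hlo : (fun h : E => ‖h‖ ^ 2) =o[nhds 0] fun h => h :=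
    Asymptotics.isLittleO_norm_pow_id one_lt_two
  have hsq : ∀ h : E, |um (y + h) - um y - p h| ≤ K * ‖h‖ ^ 2 := by
    intro h
    have h1 := hp h
    have h2 := hq h
    have h3 := hle (y + h)
    rw [← hpq] at h2
    rw [abs_le]
    constructor <;> linarith
  have hsq' : ∀ h : E, |up (y + h) - up y - p h| ≤ K * ‖h‖ ^ 2 := by
    intro h
    have h1 := hp h
    have h2 := hq h
    have h3 := hle (y + h)
    rw [← hpq] at h2
    rw [abs_le]
    constructor <;> linarith
  have key : ∀ (f : E → ℝ), (∀ h : E, |f (y + h) - f y - p h| ≤ K * ‖h‖ ^ 2) →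
      HasFDerivAt f p y := by
    intro f hf
    rw [hasFDerivAt_iff_isLittleO_nhds_zero]
    have hbig : (fun h : E => f (y + h) - f y - p h) =O[nhds 0] fun h : E => ‖h‖ ^ 2 := by
      apply Asymptotics.IsBigO.of_bound K
      filter_upwards with h
      rw [Real.norm_eq_abs, Real.norm_eq_abs, abs_of_nonneg (by positivity : (0:ℝ) ≤ ‖h‖ ^ 2)]
      exact hf h
    exact hbig.trans_isLittleO hlo
  exact ⟨hpq, key um hsq, key up hsq'⟩
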